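/- In particular (dual Yoneda), for a Q-enriched category (M, A) over a unital quantale Q and a singleton σ with right adjoint σ*, one has for every a ∈ A: ⨆ { f ∈ Q ∣ ∀ b, σ(b) * f ≤ M(b,a) } = σ*(a). -/

import Mathlib

/-- Dual Yoneda: for a singleton `σ` with right adjoint `σs` of a quantale-enriched
category, the hom from `σ` to the representable presingleton at `a` is `σs a`. -/
theorem stmt_16 {Q : Type*} [Monoid Q] [CompleteLattice Q] [IsQuantale Q]
    {A : Type*} (M : A → A → Q)
    (hrefl : ∀ a, (1 : Q) ≤ M a a)
    (htrans : ∀ a b c, M a b * M b c ≤ M a c)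
    (σ σs : A → Q)
    (hσ : ∀ a b, M a b * σ b ≤ σ a)
    (hσs : ∀ a b, σs a * M a b ≤ σs b)
    (hcounit : ∀ b c, σ b * σs c ≤ M b c)
    (hunit : (1 : Q) ≤ ⨆ a : A, σs a * σ a)
    (a : A) :
    sSup {f : Q | ∀ b, σ b * f ≤ M b a} = σs a := by
  apply le_antisymm
  · apply sSup_le
    intro f hf
    calc f = 1 * f := (one_mul f).symm
    _ ≤ (⨆ c : A, σs c * σ c) * f := mul_le_mul_left hunit f
    _ = ⨆ c : A, σs c * σ c * f := by rw [Quantale.iSup_mul_distrib]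
    _ ≤ σs a := by
        apply iSup_le
        intro c
        calc σs c * σ c * f = σs c * (σ c * f) := mul_assoc _ _ _
        _ ≤ σs c * M c a := mul_le_mul_right (hf c) _
        _ ≤ σs a := hσs c a
  · exact le_sSup (fun b => hcounit b a)
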